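/- Let Δ be an oriented n-dimensional pseudomanifold on d vertices and 𝒜 ⊆ ℤ^{d+1} its associated point configuration. Then the geometric realization of the simplicial complex Δ_{e_0}(𝒜) is homotopy equivalent to the geometric realization of Δ. -/

import Mathlib

open Finset

/-- The Koszul/simplicial sign of the vertex `i` inside the subset `s`: `(−1)^p` where
`p` is the number of elements of `s` strictly smaller than `i`. -/
def simpSgn {d : ℕ} (s : Finset (Fin d)) (i : Fin d) : ℤ := (-1) ^ (s.filter (· < i)).card

/-- An oriented pseudomanifold of dimension `n` on the `d` vertices `{0,…,d−1}`:
a collection of facets, each an `(n+1)`-element subset of the vertices, equipped with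
orientations (recorded, relative to the standard orientation coming from the ordering
of the vertices, by a sign `sgn σ = ±1`), such that every `n`-element subset of the
vertices lies in exactly zero or two facets, in the latter case the induced
orientations cancelling, and whose dual graph (a vertex for each facet, an edge when
two facets share an `n`-element subset) is connected. -/
structure OrientedPseudomanifold (n d : ℕ) where
  facets : Finset (Finset (Fin d))
  card_eq : ∀ σ ∈ facets, σ.card = n + 1
  sgn : Finset (Fin d) → ℤ
  sgn_pm : ∀ σ ∈ facets, sgn σ = 1 ∨ sgn σ = -1
  ridge : ∀ t : Finset (Fin d), t.card = n →
    (facets.filter (fun σ => t ⊆ σ)).card = 0 ∨ (facets.filter (fun σ => t ⊆ σ)).card = 2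
  cancel : ∀ t : Finset (Fin d), t.card = n →
    ∑ σ ∈ facets.filter (fun σ => t ⊆ σ), sgn σ * ∑ i ∈ σ \ t, simpSgn σ i = 0
  connected : (SimpleGraph.fromRel (fun (σ τ : {x // x ∈ facets}) =>
    ((σ : Finset (Fin d)) ∩ (τ : Finset (Fin d))).card = n)).Connected



open MvPolynomial

noncomputable section

variable {n d : ℕ} (k : Type*) [Field k] (Δ : OrientedPseudomanifold n d)

/-- The variables of the ring `S = k[x₁,…,x_d, y_σ (σ ∈ Δ_n)]`. -/
abbrev PMVars (Δ : OrientedPseudomanifold n d) : Type := Fin d ⊕ {x // x ∈ Δ.facets}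

/-- The multidegree (weight) of a variable: `deg x_i = e_i`,
`deg y_σ = wt(σ) = e_0 − Σ_{j∈σ} e_j`, in `ℤ^{d+1}` (coordinate `0` is `e_0`, and
coordinate `i.succ` is `e_i`). -/
def wtv : PMVars Δ → (Fin (d + 1) →₀ ℤ) :=
  Sum.elim (fun i => Finsupp.single i.succ 1)
    (fun σ => Finsupp.single 0 1 - ∑ j ∈ (σ : Finset (Fin d)), Finsupp.single j.succ 1)

/-- `e₀ ∈ ℤ^{d+1}`. -/
def e0 (d : ℕ) : Fin (d + 1) →₀ ℤ := Finsupp.single 0 1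

/-- The toric ideal `I_𝒜 ⊆ S` of the point configuration
`𝒜 = {e_1,…,e_d} ∪ {wt(σ) : σ ∈ Δ_n}`: the kernel of the `k`-algebra map to the
Laurent polynomial ring sending each variable to the monomial with exponent its
weight. -/
def toricIdealPM : Ideal (MvPolynomial (PMVars Δ) k) :=
  RingHom.ker (MvPolynomial.aeval (fun v =>
    (AddMonoidAlgebra.single (wtv Δ v) 1 : AddMonoidAlgebra k (Fin (d + 1) →₀ ℤ)))).toRingHom

/-- The binomial ideal `J(Δ)`, generated by the binomials `x_i y_σ − x_j y_τ` over all
pairs of facets `σ, τ` and vertices `i ∈ σ`, `j ∈ τ` with `σ∖{i} = τ∖{j}`. -/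
def JofPM : Ideal (MvPolynomial (PMVars Δ) k) :=
  Ideal.span {p | ∃ (σ τ : {x // x ∈ Δ.facets}) (i j : Fin d),
    i ∈ (σ : Finset (Fin d)) ∧ j ∈ (τ : Finset (Fin d)) ∧
    (σ : Finset (Fin d)).erase i = (τ : Finset (Fin d)).erase j ∧
    p = X (Sum.inl i) * X (Sum.inr σ) - X (Sum.inl j) * X (Sum.inr τ)}

/-- The product of the `x`-variables. -/
def xProd : MvPolynomial (PMVars Δ) k := ∏ i : Fin d, X (Sum.inl i)

/-- `J_Δ = J(Δ) : (x₁⋯x_d)^∞`, the saturation of `J(Δ)` at the product of the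
`x`-variables. -/
def JsatPM : Ideal (MvPolynomial (PMVars Δ) k) :=
  ⨆ m : ℕ, Submodule.colon (JofPM k Δ) (Ideal.span {xProd k Δ ^ m})

/-- The defining ideal `L_Δ` of the Rees algebra of the Stanley–Reisner ideal of the
Alexander dual of `Δ`: the kernel of the map `S → k[x₁,…,x_d,t]`, `x_i ↦ x_i`,
`y_σ ↦ t·∏_{i∉σ} x_i` (the extra variable `t` is `X none`). -/
def LofPM : Ideal (MvPolynomial (PMVars Δ) k) :=
  RingHom.ker (MvPolynomial.aeval (Sum.elim
    (fun i => (X (some i) : MvPolynomial (Option (Fin d)) k))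
    (fun (σ : {x // x ∈ Δ.facets}) => X none * ∏ i ∈ (σ : Finset (Fin d))ᶜ, X (some i)))).toRingHom

/-- The faces of the simplicial complex `Δ_m(𝒜)` (for `m = e₀`), per Hochster's
formula: subsets `I` of the point configuration `𝒜` (indexed by the variables) with
`e₀ − Σ_{a ∈ I} a` in the affine semigroup `ℕ𝒜`. -/
def facesDeltaE0 : Set (Finset (PMVars Δ)) :=
  {I | (e0 d - ∑ v ∈ I, wtv Δ v) ∈ AddSubmonoid.closure (Set.range (wtv Δ))}

/-- The faces of `Δ`, regarded as the simplicial complex generated by its facets. -/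
def facesPM (Δ : OrientedPseudomanifold n d) : Set (Finset (Fin d)) :=
  {t | ∃ σ ∈ Δ.facets, t ⊆ σ}

/-- The geometric realization of an abstract simplicial complex with (finite) vertex
set `V` and face set `K`, as a subspace of `V → ℝ`. -/
def realization (V : Type*) [Fintype V] (K : Set (Finset V)) : Set (V → ℝ) :=
  {f | (∀ v, 0 ≤ f v) ∧ (∑ v, f v = 1) ∧ ∃ s ∈ K, ∀ v, f v ≠ 0 → v ∈ s}

end



section PMAux

noncomputable section

variable {n d : ℕ} (Δ : OrientedPseudomanifold n d)

/-- The `e₀`-coordinate functional. -/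
def pmPhi (d : ℕ) : (Fin (d + 1) →₀ ℤ) →+ ℤ := Finsupp.applyAddHom 0

/-- The functional `f ↦ f (i.succ) + f 0`, nonnegative on the point configuration. -/
def pmPsi {d : ℕ} (i : Fin d) : (Fin (d + 1) →₀ ℤ) →+ ℤ :=
  Finsupp.applyAddHom i.succ + Finsupp.applyAddHom 0

lemma pmPhi_e0 : pmPhi d (e0 d) = 1 := by
  simp [pmPhi, e0]

lemma pmPsi_e0 (i : Fin d) : pmPsi i (e0 d) = 1 := by
  simp [pmPsi, e0, Finsupp.single_apply, (Fin.succ_ne_zero i).symm]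

lemma pmPhi_wtv_inl (i : Fin d) : pmPhi d (wtv Δ (Sum.inl i)) = 0 := by
  simp [pmPhi, wtv, Finsupp.single_apply, Fin.succ_ne_zero]

lemma pmPhi_wtv_inr (σ : {x // x ∈ Δ.facets}) : pmPhi d (wtv Δ (Sum.inr σ)) = 1 := by
  simp [pmPhi, wtv, Finsupp.single_apply, Fin.succ_ne_zero, Finset.sum_apply']

lemma pmPsi_wtv_inl (i j : Fin d) :
    pmPsi i (wtv Δ (Sum.inl j)) = if j = i then 1 else 0 := by
  simp [pmPsi, wtv, Finsupp.single_apply, Fin.succ_ne_zero, Fin.succ_inj]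

lemma pmPsi_wtv_inr (i : Fin d) (σ : {x // x ∈ Δ.facets}) :
    pmPsi i (wtv Δ (Sum.inr σ)) = 1 - (if i ∈ (σ : Finset (Fin d)) then 1 else 0) := by
  simp only [pmPsi, wtv, Sum.elim_inr, AddMonoidHom.add_apply, Finsupp.applyAddHom_apply,
    Finsupp.sub_apply, Finsupp.single_apply, Finset.sum_apply']
  rw [if_neg (Fin.succ_ne_zero i).symm]
  simp [Fin.succ_inj, Fin.succ_ne_zero, Finset.sum_ite_eq']
  ring

lemma pmPhi_wtv_nonneg (v : PMVars Δ) : 0 ≤ pmPhi d (wtv Δ v) := by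
  cases v with
  | inl i => simp [pmPhi_wtv_inl]
  | inr σ => simp [pmPhi_wtv_inr]

lemma pmPsi_wtv_nonneg (i : Fin d) (v : PMVars Δ) : 0 ≤ pmPsi i (wtv Δ v) := by
  cases v with
  | inl j => rw [pmPsi_wtv_inl]; split <;> norm_num
  | inr σ => rw [pmPsi_wtv_inr]; split <;> norm_num

lemma pm_nonneg_closure (F : (Fin (d + 1) →₀ ℤ) →+ ℤ) (hF : ∀ v, 0 ≤ F (wtv Δ v))
    {m : Fin (d + 1) →₀ ℤ} (hm : m ∈ AddSubmonoid.closure (Set.range (wtv Δ))) :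
    0 ≤ F m := by
  induction hm using AddSubmonoid.closure_induction with
  | mem x hx => obtain ⟨v, rfl⟩ := hx; exact hF v
  | zero => simp
  | add x y _ _ hx hy => rw [map_add]; exact add_nonneg hx hy

end

end PMAux

section PMAux2

variable {n d : ℕ} (Δ : OrientedPseudomanifold n d)

lemma pm_structure {s : Finset (PMVars Δ)} (hs : s ∈ facesDeltaE0 Δ) :
    ∃ σ : {x // x ∈ Δ.facets}, ∀ v ∈ s,
      v = Sum.inr σ ∨ ∃ i ∈ (σ : Finset (Fin d)), v = Sum.inl i := by
  have hm : (e0 d - ∑ v ∈ s, wtv Δ v) ∈ AddSubmonoid.closure (Set.range (wtv Δ)) := hs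
  set m := e0 d - ∑ v ∈ s, wtv Δ v with hmdef
  have hphi : pmPhi d m = 1 - ∑ v ∈ s, pmPhi d (wtv Δ v) := by
    rw [hmdef, map_sub, map_sum, pmPhi_e0]
  have hpsi : ∀ i : Fin d, pmPsi i m = 1 - ∑ v ∈ s, pmPsi i (wtv Δ v) := by
    intro i; rw [hmdef, map_sub, map_sum, pmPsi_e0]
  by_cases hy : ∃ τ : {x // x ∈ Δ.facets}, Sum.inr τ ∈ s
  · obtain ⟨τ, hτ⟩ := hy
    refine ⟨τ, fun v hv => ?_⟩
    cases v with
    | inr τ' =>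
      left
      by_contra hne
      have h1 : 0 ≤ pmPhi d m := pm_nonneg_closure Δ _ (pmPhi_wtv_nonneg Δ) hm
      have hsub : ({Sum.inr τ', Sum.inr τ} : Finset (PMVars Δ)) ⊆ s := by
        intro x hx
        rcases Finset.mem_insert.mp hx with rfl | hx
        · exact hv
        · rwa [Finset.mem_singleton.mp hx]
      have h2 : (2 : ℤ) ≤ ∑ v ∈ s, pmPhi d (wtv Δ v) := by
        have := Finset.sum_le_sum_of_subset_of_nonneg hsub
          (fun x _ _ => pmPhi_wtv_nonneg Δ x)
        refine le_trans ?_ this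
        rw [Finset.sum_pair (by simpa using hne : (Sum.inr τ' : PMVars Δ) ≠ Sum.inr τ)]
        rw [pmPhi_wtv_inr, pmPhi_wtv_inr]
        norm_num
      rw [hphi] at h1; omega
    | inl i =>
      right
      refine ⟨i, ?_, rfl⟩
      by_contra hiσ
      -- use psi i
      have h1 : 0 ≤ pmPsi i m := pm_nonneg_closure Δ _ (pmPsi_wtv_nonneg Δ i) hm
      have hsub : ({Sum.inl i, Sum.inr τ} : Finset (PMVars Δ)) ⊆ s := by
        intro x hx
        rcases Finset.mem_insert.mp hx with rfl | hx
        · exact hv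
        · rwa [Finset.mem_singleton.mp hx]
      have h2 : (2 : ℤ) ≤ ∑ v ∈ s, pmPsi i (wtv Δ v) := by
        have := Finset.sum_le_sum_of_subset_of_nonneg hsub
          (fun x _ _ => pmPsi_wtv_nonneg Δ i x)
        refine le_trans ?_ this
        rw [Finset.sum_pair (by simp : (Sum.inl i : PMVars Δ) ≠ Sum.inr τ)]
        rw [pmPsi_wtv_inl, pmPsi_wtv_inr, if_pos rfl, if_neg hiσ]
        norm_num
      rw [hpsi i] at h1; omega
  · push_neg at hy
    have hzero : ∀ v ∈ s, pmPhi d (wtv Δ v) = 0 := by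
      intro v hv
      cases v with
      | inl i => exact pmPhi_wtv_inl Δ i
      | inr τ => exact absurd hv (hy τ)
    have hphi1 : pmPhi d m = 1 := by
      rw [hphi, Finset.sum_eq_zero hzero]; ring
    obtain ⟨l, hl, hsum⟩ := AddSubmonoid.exists_multiset_of_mem_closure hm
    have hex : ∃ x ∈ l, pmPhi d x ≠ 0 := by
      by_contra hall
      push_neg at hall
      have : pmPhi d m = 0 := by
        rw [← hsum, map_multiset_sum]
        apply Multiset.sum_eq_zero
        intro y hyl
        obtain ⟨x, hx, rfl⟩ := Multiset.mem_map.mp hyl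
        exact hall x hx
      omega
    obtain ⟨x, hxl, hx0⟩ := hex
    obtain ⟨v0, hv0⟩ := hl x hxl
    obtain ⟨σ, rfl⟩ : ∃ σ, v0 = Sum.inr σ := by
      cases v0 with
      | inl i => rw [← hv0, pmPhi_wtv_inl] at hx0; omega
      | inr σ => exact ⟨σ, rfl⟩
    refine ⟨σ, fun v hv => ?_⟩
    cases v with
    | inr τ' => exact absurd hv (hy τ')
    | inl i =>
      right
      refine ⟨i, ?_, rfl⟩
      by_contra hiσ
      have hrest : m = x + (l.erase x).sum := by
        rw [← hsum, ← Multiset.sum_cons, Multiset.cons_erase hxl]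
      have hrestmem : (l.erase x).sum ∈ AddSubmonoid.closure (Set.range (wtv Δ)) := by
        apply AddSubmonoid.multiset_sum_mem
        intro y hyl
        exact AddSubmonoid.subset_closure (hl y (Multiset.mem_of_mem_erase hyl))
      have h1 : 0 ≤ pmPsi i (l.erase x).sum :=
        pm_nonneg_closure Δ _ (pmPsi_wtv_nonneg Δ i) hrestmem
      have h2 : pmPsi i x = 1 := by
        rw [← hv0, pmPsi_wtv_inr, if_neg hiσ]; ring
      have h3 : 1 ≤ pmPsi i m := by
        rw [hrest, map_add, h2]; omega
      have h4 : (1:ℤ) ≤ ∑ v ∈ s, pmPsi i (wtv Δ v) := by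
        have := Finset.single_le_sum (fun x _ => pmPsi_wtv_nonneg Δ i x) hv
        rw [pmPsi_wtv_inl, if_pos rfl] at this
        exact this
      rw [hpsi i] at h3; omega

end PMAux2

section PMAux3

noncomputable section

variable {n d : ℕ} (Δ : OrientedPseudomanifold n d)

lemma pm_sum_wtv_image (t : Finset (Fin d)) :
    ∑ v ∈ t.image Sum.inl, wtv Δ v = ∑ i ∈ t, Finsupp.single i.succ 1 := by
  rw [Finset.sum_image (fun a _ b _ h => Sum.inl.inj h)]
  rfl

lemma pm_face_inl (σ : {x // x ∈ Δ.facets}) :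
    ((σ : Finset (Fin d)).image Sum.inl) ∈ facesDeltaE0 Δ := by
  show _ ∈ AddSubmonoid.closure _
  have : e0 d - ∑ v ∈ (σ : Finset (Fin d)).image Sum.inl, wtv Δ v = wtv Δ (Sum.inr σ) := by
    rw [pm_sum_wtv_image]
    simp [e0, wtv]
  rw [this]
  exact AddSubmonoid.subset_closure ⟨Sum.inr σ, rfl⟩

lemma pm_face_cone (σ : {x // x ∈ Δ.facets}) :
    insert (Sum.inr σ) ((σ : Finset (Fin d)).image Sum.inl) ∈ facesDeltaE0 Δ := by
  show _ ∈ AddSubmonoid.closure _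
  have hnot : (Sum.inr σ : PMVars Δ) ∉ (σ : Finset (Fin d)).image Sum.inl := by
    simp
  rw [Finset.sum_insert hnot, pm_sum_wtv_image]
  have : e0 d - (wtv Δ (Sum.inr σ) + ∑ i ∈ (σ : Finset (Fin d)), Finsupp.single i.succ 1) = 0 := by
    simp only [e0, wtv, Sum.elim_inr]
    abel
  rw [this]
  exact zero_mem _

/-- Inclusion of `|Δ|` into `|Δ_{e₀}(𝒜)|`. -/
def pmF (x : Fin d → ℝ) : PMVars Δ → ℝ := Sum.elim x (fun _ => 0)

/-- The retraction `|Δ_{e₀}(𝒜)| → |Δ|`, distributing the mass of each apex over its facet. -/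
def pmG (p : PMVars Δ → ℝ) : Fin d → ℝ := fun i =>
  p (Sum.inl i) + ∑ σ : {x // x ∈ Δ.facets},
    if i ∈ (σ : Finset (Fin d)) then p (Sum.inr σ) / (n + 1) else 0

lemma pmG_nonneg {p : PMVars Δ → ℝ} (hp : ∀ v, 0 ≤ p v) (i : Fin d) : 0 ≤ pmG Δ p i := by
  refine add_nonneg (hp _) (Finset.sum_nonneg fun σ _ => ?_)
  split
  · exact div_nonneg (hp _) (by positivity)
  · exact le_refl 0
  
lemma pmG_sum (p : PMVars Δ → ℝ) : ∑ i, pmG Δ p i = ∑ v, p v := by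
  rw [Fintype.sum_sum_type]
  unfold pmG
  rw [Finset.sum_add_distrib]
  congr 1
  rw [Finset.sum_comm]
  refine Finset.sum_congr rfl fun σ _ => ?_
  rw [Finset.sum_ite_mem, Finset.univ_inter, Finset.sum_const, Δ.card_eq σ.1 σ.2]
  have h1 : ((n : ℝ) + 1) ≠ 0 := by positivity
  rw [nsmul_eq_mul]
  push_cast
  field_simp

lemma pmG_supp {p : PMVars Δ → ℝ} {σ : {x // x ∈ Δ.facets}}
    (h : ∀ v, p v ≠ 0 → v = Sum.inr σ ∨ ∃ i ∈ (σ : Finset (Fin d)), v = Sum.inl i)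
    (i : Fin d) (hi : pmG Δ p i ≠ 0) : i ∈ (σ : Finset (Fin d)) := by
  by_contra hiσ
  apply hi
  unfold pmG
  have h1 : p (Sum.inl i) = 0 := by
    by_contra h0
    rcases h _ h0 with h' | ⟨j, hj, h'⟩
    · exact absurd h' (by simp)
    · rw [Sum.inl.inj h'] at hiσ; exact hiσ hj
  rw [h1, zero_add]
  apply Finset.sum_eq_zero
  intro τ _
  split
  case isTrue hiτ =>
    have h2 : p (Sum.inr τ) = 0 := by
      by_contra h0
      rcases h _ h0 with h' | ⟨j, _, h'⟩
      · rw [Sum.inr.inj h'] at hiτ; exact hiσ hiτ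
      · exact absurd h' (by simp)
    rw [h2, zero_div]
  case isFalse => rfl

lemma pmF_sum (x : Fin d → ℝ) : ∑ v, pmF Δ x v = ∑ i, x i := by
  rw [Fintype.sum_sum_type]
  simp [pmF]

lemma pmG_pmF (x : Fin d → ℝ) (i : Fin d) : pmG Δ (pmF Δ x) i = x i := by
  unfold pmG pmF
  simp

lemma pm_mem_F {x : Fin d → ℝ} (hx : x ∈ realization (Fin d) (facesPM Δ)) :
    pmF Δ x ∈ realization (PMVars Δ) (facesDeltaE0 Δ) := by
  obtain ⟨hx0, hx1, t, ⟨σ, hσ, htσ⟩, hsupp⟩ := hx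
  refine ⟨fun v => ?_, by rw [pmF_sum]; exact hx1,
    ((σ : Finset (Fin d)).image Sum.inl : Finset (PMVars Δ)), pm_face_inl Δ ⟨σ, hσ⟩,
    fun v hv => ?_⟩
  · cases v with
    | inl i => exact hx0 i
    | inr τ => exact le_refl 0
  · cases v with
    | inl i =>
      exact Finset.mem_image_of_mem _ (htσ (hsupp i hv))
    | inr τ => exact absurd rfl hv

lemma pm_mem_G {p : PMVars Δ → ℝ} (hp : p ∈ realization (PMVars Δ) (facesDeltaE0 Δ)) :
    pmG Δ p ∈ realization (Fin d) (facesPM Δ) := by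
  obtain ⟨hp0, hp1, s, hsface, hsupp⟩ := hp
  obtain ⟨σ, hσ⟩ := pm_structure Δ hsface
  exact ⟨pmG_nonneg Δ hp0, by rw [pmG_sum]; exact hp1,
    (σ : Finset (Fin d)), ⟨σ, σ.2, subset_rfl⟩,
    fun i hi => pmG_supp Δ (fun v hv => hσ v (hsupp v hv)) i hi⟩

end

end PMAux3

section PMAux4

noncomputable section

variable {n d : ℕ} (Δ : OrientedPseudomanifold n d)

lemma pmF_continuous : Continuous (fun x : Fin d → ℝ => pmF Δ x) := by
  apply continuous_pi
  intro v
  cases v with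
  | inl i => exact continuous_apply i
  | inr τ => exact continuous_const

lemma pmG_continuous : Continuous (fun p : PMVars Δ → ℝ => pmG Δ p) := by
  apply continuous_pi
  intro i
  apply Continuous.add (continuous_apply _)
  apply continuous_finset_sum
  intro σ _
  by_cases h : i ∈ (σ : Finset (Fin d))
  · simp only [if_pos h]
    exact (continuous_apply _).div_const _
  · simp only [if_neg h]
    exact continuous_const

/-- The continuous inclusion `|Δ| → |Δ_{e₀}(𝒜)|`. -/
def pmFC : C(realization (Fin d) (facesPM Δ), realization (PMVars Δ) (facesDeltaE0 Δ)) :=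
  ⟨fun x => ⟨pmF Δ x.1, pm_mem_F Δ x.2⟩,
    Continuous.subtype_mk ((pmF_continuous Δ).comp continuous_subtype_val) _⟩

/-- The continuous retraction `|Δ_{e₀}(𝒜)| → |Δ|`. -/
def pmGC : C(realization (PMVars Δ) (facesDeltaE0 Δ), realization (Fin d) (facesPM Δ)) :=
  ⟨fun p => ⟨pmG Δ p.1, pm_mem_G Δ p.2⟩,
    Continuous.subtype_mk ((pmG_continuous Δ).comp continuous_subtype_val) _⟩

lemma pm_homotopy_mem {p : PMVars Δ → ℝ} (hp : p ∈ realization (PMVars Δ) (facesDeltaE0 Δ))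
    {t : ℝ} (ht0 : 0 ≤ t) (ht1 : t ≤ 1) :
    (fun v => (1 - t) * pmF Δ (pmG Δ p) v + t * p v) ∈
      realization (PMVars Δ) (facesDeltaE0 Δ) := by
  have hFG := pm_mem_F Δ (pm_mem_G Δ hp)
  obtain ⟨hq0, hq1, _, _, _⟩ := hFG
  obtain ⟨hp0, hp1, s, hsface, hsupp⟩ := hp
  obtain ⟨σ, hσ⟩ := pm_structure Δ hsface
  refine ⟨fun v => add_nonneg (mul_nonneg (by linarith) (hq0 v)) (mul_nonneg ht0 (hp0 v)),
    ?_, insert (Sum.inr σ) ((σ : Finset (Fin d)).image Sum.inl), pm_face_cone Δ σ,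
    fun v hv => ?_⟩
  · rw [Finset.sum_add_distrib, ← Finset.mul_sum, ← Finset.mul_sum, hq1, hp1]
    ring
  · have hone : pmF Δ (pmG Δ p) v ≠ 0 ∨ p v ≠ 0 := by
      by_contra hc
      push_neg at hc
      apply hv
      show (1 - t) * pmF Δ (pmG Δ p) v + t * p v = 0
      rw [hc.1, hc.2]
      ring
    rcases hone with h | h
    · cases v with
      | inl i =>
        have hi : pmG Δ p i ≠ 0 := h
        have : i ∈ (σ : Finset (Fin d)) :=
          pmG_supp Δ (fun v hv => hσ v (hsupp v hv)) i hi
        exact Finset.mem_insert_of_mem (Finset.mem_image_of_mem _ this)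
      | inr τ => exact absurd rfl h
    · rcases hσ v (hsupp v h) with rfl | ⟨i, hi, rfl⟩
      · exact Finset.mem_insert_self _ _
      · exact Finset.mem_insert_of_mem (Finset.mem_image_of_mem _ hi)

end

end PMAux4

/-!
STATEMENT 9: for an oriented `n`-dimensional pseudomanifold `Δ` on `d` vertices with
associated point configuration `𝒜 ⊆ ℤ^{d+1}`, the geometric realization of the
simplicial complex `Δ_{e₀}(𝒜)` is homotopy equivalent to the geometric realization
of `Δ`.
-/

theorem deltaE0_homotopy_equivalent_to_pseudomanifold {n d : ℕ}
    (Δ : OrientedPseudomanifold n d) :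
    Nonempty (ContinuousMap.HomotopyEquiv
      (realization (Fin d) (facesPM Δ))
      (realization (PMVars Δ) (facesDeltaE0 Δ))) := by
  have c1 : Continuous fun q : unitInterval × (realization (PMVars Δ) (facesDeltaE0 Δ)) =>
      (q.1 : ℝ) := continuous_subtype_val.comp continuous_fst
  have cp : Continuous fun q : unitInterval × (realization (PMVars Δ) (facesDeltaE0 Δ)) =>
      (q.2 : PMVars Δ → ℝ) := continuous_subtype_val.comp continuous_snd
  refine ⟨⟨pmFC Δ, pmGC Δ, ?_, ?_⟩⟩
  · have h : (pmGC Δ).comp (pmFC Δ) = ContinuousMap.id _ := by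
      ext x i
      exact pmG_pmF Δ x.1 i
    rw [h]
  · refine ⟨⟨⟨fun q => ⟨fun v => (1 - (q.1 : ℝ)) * pmF Δ (pmG Δ (q.2 : PMVars Δ → ℝ)) v
        + (q.1 : ℝ) * (q.2 : PMVars Δ → ℝ) v,
        pm_homotopy_mem Δ q.2.2 q.1.2.1 q.1.2.2⟩, ?_⟩, ?_, ?_⟩⟩
    · apply Continuous.subtype_mk
      apply continuous_pi
      intro v
      have c2 : Continuous fun q : unitInterval × (realization (PMVars Δ) (facesDeltaE0 Δ)) =>
          pmF Δ (pmG Δ (q.2 : PMVars Δ → ℝ)) v :=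
        (continuous_apply v).comp ((pmF_continuous Δ).comp ((pmG_continuous Δ).comp cp))
      have c3 : Continuous fun q : unitInterval × (realization (PMVars Δ) (facesDeltaE0 Δ)) =>
          (q.2 : PMVars Δ → ℝ) v := (continuous_apply v).comp cp
      exact ((continuous_const.sub c1).mul c2).add (c1.mul c3)
    · intro x
      apply Subtype.ext
      funext v
      show (1 - ((0 : unitInterval) : ℝ)) * pmF Δ (pmG Δ (x : PMVars Δ → ℝ)) v
          + ((0 : unitInterval) : ℝ) * (x : PMVars Δ → ℝ) v = _
      simp [pmFC, pmGC, ContinuousMap.comp]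
    · intro x
      apply Subtype.ext
      funext v
      show (1 - ((1 : unitInterval) : ℝ)) * pmF Δ (pmG Δ (x : PMVars Δ → ℝ)) v
          + ((1 : unitInterval) : ℝ) * (x : PMVars Δ → ℝ) v = _
      simp
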